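/- Let G be a connected finite simple graph with n vertices and m edges that contains a clique on d vertices (d ≥ 2), and suppose m < (d−1)(d+2)/2. Then d is an eigenvalue of the combinatorial Laplacian L(G) = D(G) − A(G) of G, with multiplicity at least (d−1)(d+2)/2 − m; equivalently, the number of indices k with λ_k(G) = d is at least (d−1)(d+2)/2 − m, where λ_1(G) ≤ … ≤ λ_n(G) are the eigenvalues of L(G) in nondecreasing order with multiplicity. -/

import Mathlib

open scoped Classical

open Polynomial Matrix Finset



lemma auxA {n : Type} [Fintype n] [DecidableEq n] {A : Matrix n n ℝ} (hA : A.IsHermitian) :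
    A.charpoly = ∏ i : n, (X - C (hA.eigenvalues i)) := by
  have e2 : LinearMap.toMatrix hA.eigenvectorBasis.toBasis hA.eigenvectorBasis.toBasis
      (Matrix.toEuclideanLin A) = Matrix.diagonal hA.eigenvalues := by
    ext i j
    rw [LinearMap.toMatrix_apply]
    have h3 : Matrix.toEuclideanLin A (hA.eigenvectorBasis.toBasis j)
        = hA.eigenvalues j • (hA.eigenvectorBasis.toBasis j) := by
      apply (WithLp.equiv 2 (n → ℝ)).injective
      simpa [OrthonormalBasis.coe_toBasis] using hA.mulVec_eigenvectorBasis j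
    rw [h3, LinearEquiv.map_smul]
    by_cases h : i = j <;>
      simp [Module.Basis.repr_self, Finsupp.single_apply, Matrix.diagonal_apply, h]
  have h1 : A.charpoly = (Matrix.toEuclideanLin A).charpoly := by
    conv_lhs => rw [show A = LinearMap.toMatrix (PiLp.basisFun 2 ℝ n) (PiLp.basisFun 2 ℝ n)
      (Matrix.toEuclideanLin A) by rw [toEuclideanLin_eq_toLin, LinearMap.toMatrix_toLin]]
    exact LinearMap.charpoly_toMatrix _ _
  have h2 : (Matrix.toEuclideanLin A).charpoly = (Matrix.diagonal hA.eigenvalues).charpoly := by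
    rw [← e2]; exact (LinearMap.charpoly_toMatrix _ _).symm
  rw [h1, h2, Matrix.charpoly, charmatrix]
  have h4 : (scalar n X - C.mapMatrix (diagonal hA.eigenvalues))
      = diagonal (fun i => X - C (hA.eigenvalues i)) := by
    ext i j
    by_cases h : i = j <;> simp [h, scalar_apply, diagonal_apply]
  rw [h4, Matrix.det_diagonal]

lemma auxA' {n : Type} [Fintype n] [DecidableEq n] {A : Matrix n n ℝ} (hA : A.IsHermitian) :
    A.charpoly.roots = Finset.univ.val.map hA.eigenvalues := by
  rw [auxA hA]
  have : (∏ i : n, (X - C (hA.eigenvalues i)))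
      = ((Finset.univ.val.map hA.eigenvalues).map (fun a => X - C a)).prod := by
    rw [Multiset.map_map]; rfl
  rw [this, Polynomial.roots_multiset_prod_X_sub_C]

lemma auxB {n : Type} [Fintype n] [DecidableEq n] {A : Matrix n n ℝ} (hA : A.IsHermitian)
    (μ : ℝ) {ι : Type} [Fintype ι] {x : ι → (n → ℝ)} (hli : LinearIndependent ℝ x)
    (heig : ∀ k, A *ᵥ x k = μ • x k) :
    Fintype.card ι ≤ (Finset.univ.filter (fun i => hA.eigenvalues i = μ)).card := by
  classical
  set b := hA.eigenvectorBasis with hb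
  set S := Finset.univ.filter (fun i => hA.eigenvalues i = μ) with hS
  set T : Finset (n → ℝ) := S.image (fun i => (⇑(b i) : n → ℝ)) with hT
  have hsym : Aᵀ = A := by
    have := hA; rwa [Matrix.IsHermitian, Matrix.conjTranspose,
      show (star : ℝ → ℝ) = id from rfl, Matrix.map_id] at this
  have hmem : ∀ k, x k ∈ Submodule.span ℝ (T : Set (n → ℝ)) := by
    intro k
    have horth : ∀ i, i ∉ S → (⇑(b i) : n → ℝ) ⬝ᵥ x k = 0 := by
      intro i hi
      have hne : hA.eigenvalues i ≠ μ := by simpa [hS] using hi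
      have h1 : (A *ᵥ ⇑(b i)) ⬝ᵥ x k = hA.eigenvalues i * (⇑(b i) ⬝ᵥ x k) := by
        rw [hA.mulVec_eigenvectorBasis]; simp [smul_dotProduct, hb]
      have h2 : (A *ᵥ ⇑(b i)) ⬝ᵥ x k = μ * (⇑(b i) ⬝ᵥ x k) := by
        conv_lhs => rw [← hsym, Matrix.mulVec_transpose, ← Matrix.dotProduct_mulVec, heig k]
        simp [dotProduct_smul]
      rcases mul_eq_mul_right_iff.mp (h1.symm.trans h2) with h | h
      · exact absurd h hne
      · exact h
    have h1 : ∀ i, b.repr ((WithLp.equiv 2 (n → ℝ)).symm (x k)) i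
        = (⇑(b i) : n → ℝ) ⬝ᵥ x k := by
      intro i
      rw [OrthonormalBasis.repr_apply_apply]
      simp [PiLp.inner_apply, RCLike.inner_apply, dotProduct, mul_comm]
    have hxk : x k = ∑ i ∈ S, ((⇑(b i) : n → ℝ) ⬝ᵥ x k) • (⇑(b i) : n → ℝ) := by
      rw [Finset.sum_subset (Finset.subset_univ S)
        (fun i _ hi => by rw [horth i hi, zero_smul])]
      have h0 := b.sum_repr ((WithLp.equiv 2 (n → ℝ)).symm (x k))
      simp_rw [h1] at h0
      have h0' := congrArg WithLp.ofLp h0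
      simpa using h0'.symm
    rw [hxk]
    exact Submodule.sum_mem _ fun i hiS => Submodule.smul_mem _ _
      (Submodule.subset_span (Finset.mem_image_of_mem _ hiS))
  calc Fintype.card ι = Module.finrank ℝ (Submodule.span ℝ (Set.range x)) :=
        (finrank_span_eq_card hli).symm
    _ ≤ Module.finrank ℝ (Submodule.span ℝ (T : Set (n → ℝ))) := by
        apply Submodule.finrank_mono
        rw [Submodule.span_le]
        rintro - ⟨k, rfl⟩; exact hmem k
    _ ≤ T.card := finrank_span_finset_le_card T
    _ ≤ S.card := Finset.card_image_le

lemma auxC {V : Type} [Fintype V] [DecidableEq V] (G : SimpleGraph V) [DecidableRel G.Adj]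
    {d : ℕ} (hd : 1 ≤ d) {s P : Finset V} (hscard : s.card = d) (hsclique : G.IsClique ↑s)
    (hP : P = s.filter fun v => ∀ w, G.Adj v w → w ∈ s)
    {a b : V} (ha : a ∈ P) (hb : b ∈ P) :
    G.lapMatrix ℝ *ᵥ (Pi.single a 1 - Pi.single b 1)
      = (d : ℝ) • (Pi.single a 1 - Pi.single b 1) := by
  have hPs : ∀ v ∈ P, v ∈ s ∧ (∀ w, G.Adj v w → w ∈ s) := by
    intro v hv; rw [hP, Finset.mem_filter] at hv; exact ⟨hv.1, hv.2⟩
  obtain ⟨has, hapure⟩ := hPs a ha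
  obtain ⟨hbs, hbpure⟩ := hPs b hb
  have hdeg : ∀ v ∈ P, G.degree v = d - 1 := by
    intro v hv
    obtain ⟨hvs, hvpure⟩ := hPs v hv
    have : G.neighborFinset v = s.erase v := by
      ext w
      simp only [SimpleGraph.mem_neighborFinset, Finset.mem_erase]
      constructor
      · intro h; exact ⟨(G.ne_of_adj h).symm, hvpure w h⟩
      · intro ⟨hne, hws⟩; exact hsclique hvs hws (Ne.symm hne)
    rw [SimpleGraph.degree, this, Finset.card_erase_of_mem hvs, hscard]
  by_cases hab : a = b
  · simp [hab]
  funext v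
  rw [SimpleGraph.lapMatrix_mulVec_apply]
  have hsum : ∀ u : V, (∑ w ∈ G.neighborFinset v, (Pi.single u (1:ℝ)) w)
      = if G.Adj v u then 1 else 0 := by
    intro u
    rw [Finset.sum_pi_single']
    simp [SimpleGraph.mem_neighborFinset]
  have hsplit : (∑ w ∈ G.neighborFinset v, ((Pi.single a 1 - Pi.single b 1 : V → ℝ)) w)
      = (if G.Adj v a then (1:ℝ) else 0) - (if G.Adj v b then 1 else 0) := by
    simp only [Pi.sub_apply, Finset.sum_sub_distrib, hsum]
  rw [hsplit]
  have hcast : ((d - 1 : ℕ) : ℝ) = (d : ℝ) - 1 := by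
    have := Nat.cast_sub (R := ℝ) hd; simpa using this
  by_cases hva : v = a
  · subst hva
    rw [hdeg v ha]
    have h1 : ¬ G.Adj v v := G.irrefl
    have h2 : G.Adj v b := hsclique has hbs hab
    simp [h1, h2, Pi.single_apply, Ne.symm hab, hcast]
  by_cases hvb : v = b
  · subst hvb
    rw [hdeg v hb]
    have h1 : ¬ G.Adj v v := G.irrefl
    have h2 : G.Adj v a := hsclique hbs has (fun h => hab h.symm)
    simp [h1, h2, Pi.single_apply, hva, hcast]
  · -- v ≠ a, b
    have hadj : (if G.Adj v a then (1:ℝ) else 0) = (if G.Adj v b then 1 else 0) := by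
      by_cases hvs : v ∈ s
      · have h1 : G.Adj v a := hsclique hvs has hva
        have h2 : G.Adj v b := hsclique hvs hbs hvb
        simp [h1, h2]
      · have h1 : ¬ G.Adj v a := fun h => hvs (hapure v h.symm)
        have h2 : ¬ G.Adj v b := fun h => hvs (hbpure v h.symm)
        simp [h1, h2]
    rw [hadj]
    simp [Pi.single_apply, hva, hvb]

lemma auxE {V : Type} [Fintype V] [DecidableEq V] (P : Finset V) (a : V) :
    LinearIndependent ℝ (fun v : {v // v ∈ P.erase a} =>
      (Pi.single (v : V) (1:ℝ) - Pi.single a 1 : V → ℝ)) := by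
  rw [Fintype.linearIndependent_iff]
  intro g hg w
  have h := congr_fun hg (w : V)
  have hw : (w : V) ≠ a := (Finset.mem_erase.mp w.2).1
  simp only [Finset.sum_apply, Pi.smul_apply, Pi.sub_apply, Pi.single_apply, smul_eq_mul,
    Pi.zero_apply, if_neg hw, sub_zero] at h
  have hiff : ∀ v : {v // v ∈ P.erase a}, ((w : V) = (v : V)) ↔ v = w := by
    intro v; constructor
    · intro hh; exact Subtype.ext hh.symm
    · intro hh; rw [hh]
  simp_rw [hiff, mul_ite, mul_one, mul_zero] at h
  rwa [Finset.sum_ite_eq' Finset.univ w g, if_pos (Finset.mem_univ w)] at h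

lemma auxD {V : Type} [Fintype V] [DecidableEq V] (G : SimpleGraph V) [DecidableRel G.Adj]
    {d : ℕ} {s P : Finset V} (hscard : s.card = d) (hsclique : G.IsClique ↑s)
    (hP : P = s.filter fun v => ∀ w, G.Adj v w → w ∈ s) :
    d.choose 2 + (s \ P).card ≤ G.edgeFinset.card := by
  classical
  set K := G.edgeFinset.filter (fun e => ∀ v ∈ e, v ∈ s) with hK
  set E2 := G.edgeFinset.filter (fun e => ¬ ∀ v ∈ e, v ∈ s) with hE2
  have h1 : K.card + E2.card = G.edgeFinset.card :=
    Finset.card_filter_add_card_filter_not _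
  have h2 : d.choose 2 ≤ K.card := by
    have hsub : s.offDiag.image (Function.uncurry Sym2.mk) ⊆ K := by
      intro e he
      obtain ⟨⟨x, y⟩, hxy, rfl⟩ := Finset.mem_image.mp he
      obtain ⟨hx, hy, hne⟩ := Finset.mem_offDiag.mp hxy
      rw [hK, Finset.mem_filter]
      refine ⟨?_, ?_⟩
      · rw [SimpleGraph.mem_edgeFinset, Function.uncurry_apply_pair, SimpleGraph.mem_edgeSet]
        exact hsclique hx hy hne
      · intro v hv
        rcases Sym2.mem_iff.mp hv with rfl | rfl
        · exact hx
        · exact hy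
    calc d.choose 2 = (s.offDiag.image (Function.uncurry Sym2.mk)).card := by
          rw [Sym2.card_image_offDiag, hscard]
      _ ≤ K.card := Finset.card_le_card hsub
  have h3 : (s \ P).card ≤ E2.card := by
    have hex : ∀ v ∈ s \ P, ∃ w, G.Adj v w ∧ w ∉ s := by
      intro v hv
      obtain ⟨hvs, hvP⟩ := Finset.mem_sdiff.mp hv
      rw [hP, Finset.mem_filter] at hvP
      push_neg at hvP
      exact hvP hvs
    set f : V → Sym2 V := fun v =>
      if h : ∃ w, G.Adj v w ∧ w ∉ s then s(v, h.choose) else s(v, v) with hf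
    apply Finset.card_le_card_of_injOn f
    · intro v hv
      have h := hex v hv
      have hfv : f v = s(v, h.choose) := dif_pos h
      rw [hE2, Finset.mem_coe, Finset.mem_filter, hfv]
      obtain ⟨hadj, hns⟩ := h.choose_spec
      refine ⟨?_, ?_⟩
      · rw [SimpleGraph.mem_edgeFinset, SimpleGraph.mem_edgeSet]; exact hadj
      · push_neg
        exact ⟨h.choose, Sym2.mem_mk_right _ _, hns⟩
    · intro v1 hv1 v2 hv2 heq
      have h1' := hex v1 (Finset.mem_coe.mp hv1)
      have h2' := hex v2 (Finset.mem_coe.mp hv2)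
      simp only [hf] at heq
      rw [dif_pos h1', dif_pos h2'] at heq
      rcases Sym2.eq_iff.mp heq with ⟨h, _⟩ | ⟨ha, hb⟩
      · exact h
      · exfalso
        exact h2'.choose_spec.2 (ha ▸ (Finset.mem_sdiff.mp (Finset.mem_coe.mp hv1)).1)
  omega



/-- if a connected graph `G` with `m` edges contains a `d`-clique
(`d ≥ 2`) and `m < (d−1)(d+2)/2`, then `d` is an eigenvalue of the
combinatorial Laplacian `L(G) = D(G) − A(G)` with multiplicity at least
`(d−1)(d+2)/2 − m` (multiplicity = number of times `d` occurs as a root of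
the characteristic polynomial, counted with multiplicity). -/
theorem stmt17 {V : Type} [Fintype V] [DecidableEq V]
    (G : SimpleGraph V) [DecidableRel G.Adj]
    (hconn : G.Connected) (d : ℕ) (hd : 2 ≤ d)
    (hclique : ¬ G.CliqueFree d)
    (hm : G.edgeFinset.card < (d - 1) * (d + 2) / 2) :
    Module.End.HasEigenvalue (Matrix.toLin' (G.lapMatrix ℝ)) (d : ℝ)
    ∧ (d - 1) * (d + 2) / 2 - G.edgeFinset.card
        ≤ Multiset.count ((d : ℝ)) (G.lapMatrix ℝ).charpoly.roots := by

  rw [SimpleGraph.CliqueFree] at hclique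
  push_neg at hclique
  obtain ⟨s, hs⟩ := hclique
  have hsclique : G.IsClique ↑s := hs.isClique
  have hscard : s.card = d := hs.card_eq
  set P := s.filter (fun v => ∀ w, G.Adj v w → w ∈ s) with hP
  have hPs : P ⊆ s := Finset.filter_subset _ _
  -- arithmetic
  have hch : (d - 1) * (d + 2) / 2 = d.choose 2 + (d - 1) := by
    obtain ⟨e, rfl⟩ : ∃ e, d = e + 2 := ⟨d - 2, by omega⟩
    rw [Nat.choose_two_right]
    have h1 : e + 2 - 1 = e + 1 := by omega
    have h2 : (e + 1) * (e + 2 + 2) = (e + 2) * (e + 1) + (e + 1) * 2 := by ring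
    rw [h1, h2, Nat.add_mul_div_right _ _ (by norm_num : 0 < 2)]
  have hcount := auxD G hscard hsclique hP
  rw [Finset.card_sdiff_of_subset hPs, hscard] at hcount
  have hple : P.card ≤ d := hscard ▸ Finset.card_le_card hPs
  have hkey : (d - 1) * (d + 2) / 2 - G.edgeFinset.card ≤ P.card - 1 ∧ 2 ≤ P.card := by
    omega
  obtain ⟨a, ha, b, hb, hab⟩ := Finset.one_lt_card.mp hkey.2
  -- the eigenvector family
  set x : {v // v ∈ P.erase a} → (V → ℝ) :=
    fun v => (Pi.single (v : V) (1:ℝ) - Pi.single a 1) with hx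
  have heig : ∀ k, G.lapMatrix ℝ *ᵥ x k = (d : ℝ) • x k := by
    intro k
    exact auxC G (by omega) hscard hsclique hP
      (Finset.mem_of_mem_erase k.2) ha
  have hherm : (G.lapMatrix ℝ).IsHermitian := (SimpleGraph.posSemidef_lapMatrix ℝ G).1
  constructor
  · -- HasEigenvalue
    have hbP : b ∈ P.erase a := Finset.mem_erase.mpr ⟨fun h => hab h.symm, hb⟩
    have hx0 : x ⟨b, hbP⟩ ≠ 0 := by
      intro h0
      have h1 := congr_fun h0 b
      simp only [hx, Pi.sub_apply, Pi.single_apply, Pi.zero_apply] at h1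
      rw [if_neg (show ¬ b = a from fun h => hab h.symm)] at h1
      norm_num at h1
    exact Module.End.hasEigenvalue_of_hasEigenvector
      ⟨Module.End.mem_eigenspace_iff.mpr (by rw [Matrix.toLin'_apply]; exact heig _), hx0⟩
  · -- multiplicity bound
    have hli : LinearIndependent ℝ x := auxE P a
    have hcard := auxB hherm (d : ℝ) hli heig
    have hcardι : Fintype.card {v // v ∈ P.erase a} = P.card - 1 := by
      rw [Fintype.card_coe, Finset.card_erase_of_mem ha]
    have hroots : Multiset.count ((d:ℝ)) (G.lapMatrix ℝ).charpoly.roots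
        = (Finset.univ.filter (fun i => hherm.eigenvalues i = (d:ℝ))).card := by
      rw [auxA' hherm, Multiset.count_map, Finset.card, Finset.filter_val]
      congr 1
      apply Multiset.filter_congr
      intro y _
      exact eq_comm
    rw [hroots]
    calc (d - 1) * (d + 2) / 2 - G.edgeFinset.card ≤ P.card - 1 := hkey.1
      _ = Fintype.card {v // v ∈ P.erase a} := hcardι.symm
      _ ≤ _ := hcard
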